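/- For all ρ > 0, μ > 0 and κ > 0, if p* is an optimal solution of the dual problem (a minimizer of θ over ℝ^m) and p_DS* is the unique minimizer of θ_{ρ,μ,κ}, then θ_{ρ,μ}(0) − θ_{ρ,μ}(p_DS*) ≤ θ(0) − θ(p*) + ρ D_f + μ D_g. -/

import Mathlib

open scoped RealInnerProductSpace
noncomputable section

/-- `Euc k` is the Euclidean space `ℝ^k`. -/
abbrev Euc (k : ℕ) := EuclideanSpace ℝ (Fin k)

/-- `f` is proper: nowhere `-∞` and somewhere finite. -/
def IsProperFn {k : ℕ} (f : Euc k → EReal) : Prop :=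
  (∀ x, f x ≠ ⊥) ∧ ∃ x, f x ≠ ⊤

/-- Convexity of an extended-real-valued function. -/
def IsConvexFn {k : ℕ} (f : Euc k → EReal) : Prop :=
  ∀ x y : Euc k, ∀ t : ℝ, 0 < t → t < 1 →
    f (t • x + (1 - t) • y) ≤ (t : EReal) * f x + ((1 - t : ℝ) : EReal) * f y

/-- `f` is proper, convex, lower semicontinuous with bounded effective domain. -/
def NiceFn {k : ℕ} (f : Euc k → EReal) : Prop :=
  IsProperFn f ∧ IsConvexFn f ∧ LowerSemicontinuous f ∧
    Bornology.IsBounded {x | f x ≠ ⊤}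

/-- The Fenchel conjugate `f*(q) = sup_x {⟨q,x⟩ - f(x)}` (real-valued). -/
noncomputable def conjFn {k : ℕ} (f : Euc k → EReal) (q : Euc k) : ℝ :=
  (⨆ x, ((⟪q, x⟫ : ℝ) : EReal) - f x).toReal

/-- The Fenchel conjugate as an extended real. -/
noncomputable def conjE {k : ℕ} (f : Euc k → EReal) (q : Euc k) : EReal :=
  ⨆ x, ((⟪q, x⟫ : ℝ) : EReal) - f x

/-- The smoothed conjugate `f_r*(q) = sup_x {⟨q,x⟩ - f(x) - (r/2)‖x‖²}`. -/
noncomputable def conjSm {k : ℕ} (f : Euc k → EReal) (r : ℝ) (q : Euc k) : ℝ :=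
  (⨆ x, ((⟪q, x⟫ - r / 2 * ‖x‖ ^ 2 : ℝ) : EReal) - f x).toReal

/-- The proximal objective `x ↦ f(x) + (r/2)‖u - x‖²`. -/
noncomputable def proxObj {k : ℕ} (f : Euc k → EReal) (r : ℝ) (u x : Euc k) : EReal :=
  f x + ((r / 2 * ‖u - x‖ ^ 2 : ℝ) : EReal)

/-- `D_f = sup {‖x‖²/2 : x ∈ dom f}`. -/
noncomputable def Dsup {k : ℕ} (f : Euc k → EReal) : ℝ :=
  sSup ((fun x : Euc k => ‖x‖ ^ 2 / 2) '' {x | f x ≠ ⊤})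

/-- `x0` is the unique global minimizer of `h`. -/
def UniqMin {α : Type*} {β : Type*} [Preorder β] (h : α → β) (x0 : α) : Prop :=
  (∀ x, h x0 ≤ h x) ∧ ∀ x, (∀ y, h x ≤ h y) → x = x0

/-- The dual objective `θ(p) = f*(A*p) + g*(-p)`. -/
noncomputable def theta {n m : ℕ} (f : Euc n → EReal) (g : Euc m → EReal)
    (A : Euc n →L[ℝ] Euc m) (p : Euc m) : ℝ :=
  conjFn f (ContinuousLinearMap.adjoint A p) + conjFn g (-p)

/-- The singly smoothed dual objective `θ_{ρ,μ}(p) = f_ρ*(A*p) + g_μ*(-p)`. -/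
noncomputable def thetaSm {n m : ℕ} (f : Euc n → EReal) (g : Euc m → EReal)
    (A : Euc n →L[ℝ] Euc m) (r s : ℝ) (p : Euc m) : ℝ :=
  conjSm f r (ContinuousLinearMap.adjoint A p) + conjSm g s (-p)

/-- The doubly smoothed dual objective `θ_{ρ,μ,κ}(p) = θ_{ρ,μ}(p) + (κ/2)‖p‖²`. -/
noncomputable def thetaSmK {n m : ℕ} (f : Euc n → EReal) (g : Euc m → EReal)
    (A : Euc n →L[ℝ] Euc m) (r s c : ℝ) (p : Euc m) : ℝ :=
  thetaSm f g A r s p + c / 2 * ‖p‖ ^ 2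

/-- The optimal value of the primal problem `v(P) = inf {f(x) + g(Ax)}`. -/
noncomputable def vPrimal {n m : ℕ} (f : Euc n → EReal) (g : Euc m → EReal)
    (A : Euc n →L[ℝ] Euc m) : EReal := ⨅ x, f x + g (A x)

/-- The optimal value of the dual problem `v(D) = -inf θ`. -/
noncomputable def vDual {n m : ℕ} (f : Euc n → EReal) (g : Euc m → EReal)
    (A : Euc n →L[ℝ] Euc m) : ℝ := -(⨅ p, theta f g A p)

section Aux
variable {k : ℕ}

/-- A nice function is bounded below by a real constant. -/
lemma nice_lb {f : Euc k → EReal} (hf : NiceFn f) : ∃ c : ℝ, ∀ x, (c : EReal) ≤ f x := by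
  obtain ⟨⟨hbot, x0, hx0⟩, _, hlsc, hbdd⟩ := hf
  have hK : IsCompact (closure {x | f x ≠ ⊤}) := hbdd.isCompact_closure
  have hr : ∀ x : Euc k, ∃ r : ℝ, (r : EReal) < f x := by
    intro x
    rcases EReal.lt_iff_exists_real_btwn.1 (Ne.bot_lt (hbot x)) with ⟨r, _, hr2⟩
    exact ⟨r, hr2⟩
  choose r hrlt using hr
  obtain ⟨t, ht⟩ := hK.elim_finite_subcover (fun x => f ⁻¹' Set.Ioi (r x))
    (fun x => hlsc.isOpen_preimage (r x))
    (fun y _ => Set.mem_iUnion.2 ⟨y, hrlt y⟩)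
  have hx0K : x0 ∈ closure {x | f x ≠ ⊤} := subset_closure hx0
  obtain ⟨i, hi, _⟩ := Set.mem_iUnion₂.1 (ht hx0K)
  refine ⟨t.inf' ⟨i, hi⟩ r, fun y => ?_⟩
  by_cases hy : f y = ⊤
  · simp [hy]
  · obtain ⟨j, hj, hjy⟩ := Set.mem_iUnion₂.1 (ht (subset_closure hy))
    exact le_trans (EReal.coe_le_coe_iff.2 (Finset.inf'_le r hj)) (le_of_lt hjy)

/-- The norm bound on the domain. -/
lemma nice_R {f : Euc k → EReal} (hf : NiceFn f) :
    ∃ R : ℝ, ∀ x, f x ≠ ⊤ → ‖x‖ ≤ R :=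
  isBounded_iff_forall_norm_le.1 hf.2.2.2

lemma sup_ne_bot {f : Euc k → EReal} (hf : NiceFn f) (φ : Euc k → ℝ) :
    (⨆ x, ((φ x : ℝ) : EReal) - f x) ≠ ⊥ := by
  obtain ⟨x1, hx1⟩ := hf.1.2
  have h1 : ((φ x1 : ℝ) : EReal) - f x1 = ((φ x1 - (f x1).toReal : ℝ) : EReal) := by
    rw [EReal.coe_sub, EReal.coe_toReal hx1 (hf.1.1 x1)]
  have h2 := le_iSup (fun x => ((φ x : ℝ) : EReal) - f x) x1
  rw [h1] at h2
  exact fun h => (EReal.bot_lt_coe _).not_ge (h ▸ h2)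

lemma sup_ne_top {f : Euc k → EReal} (hf : NiceFn f) (φ : Euc k → ℝ) (M : ℝ)
    (hM : ∀ x, f x ≠ ⊤ → φ x ≤ M) :
    (⨆ x, ((φ x : ℝ) : EReal) - f x) ≠ ⊤ := by
  obtain ⟨c, hc⟩ := nice_lb hf
  have : (⨆ x, ((φ x : ℝ) : EReal) - f x) ≤ ((M - c : ℝ) : EReal) := by
    refine iSup_le fun x => ?_
    by_cases hx : f x = ⊤
    · rw [hx, EReal.sub_top]; exact bot_le
    · rw [show f x = ((f x).toReal : EReal) from (EReal.coe_toReal hx (hf.1.1 x)).symm,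
        ← EReal.coe_sub]
      refine EReal.coe_le_coe_iff.2 (sub_le_sub (hM x hx) ?_)
      have := hc x
      rw [show f x = ((f x).toReal : EReal) from (EReal.coe_toReal hx (hf.1.1 x)).symm]
        at this
      exact EReal.coe_le_coe_iff.1 this
  exact fun h => (EReal.coe_lt_top (M - c)).not_ge (h ▸ this)

/-- Smoothing decreases the conjugate. -/
lemma conjSm_le_conjFn {f : Euc k → EReal} (hf : NiceFn f) {r : ℝ} (hr : 0 ≤ r)
    (q : Euc k) : conjSm f r q ≤ conjFn f q := by
  obtain ⟨R, hR⟩ := nice_R hf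
  refine EReal.toReal_le_toReal ?_
    (sup_ne_bot hf _) (sup_ne_top hf _ (‖q‖ * R) fun x hx =>
      le_trans (real_inner_le_norm q x) (mul_le_mul_of_nonneg_left (hR x hx) (norm_nonneg q)))
  refine iSup_mono fun x => EReal.sub_le_sub (EReal.coe_le_coe_iff.2 ?_) le_rfl
  nlinarith [sq_nonneg ‖x‖]

/-- `Dsup` bounds `‖x‖²/2` on the domain. -/
lemma half_sq_le_Dsup {f : Euc k → EReal} (hf : NiceFn f) {x : Euc k} (hx : f x ≠ ⊤) :
    ‖x‖ ^ 2 / 2 ≤ Dsup f := by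
  obtain ⟨R, hR⟩ := nice_R hf
  refine le_csSup ⟨R ^ 2 / 2, ?_⟩ ⟨x, hx, rfl⟩
  rintro y ⟨z, hz, rfl⟩
  have h1 := hR z hz
  have h2 := norm_nonneg z
  nlinarith

/-- The smoothing gap bound. -/
lemma conjFn_le_conjSm {f : Euc k → EReal} (hf : NiceFn f) {r : ℝ} (hr : 0 ≤ r)
    (q : Euc k) : conjFn f q ≤ conjSm f r q + r * Dsup f := by
  obtain ⟨R, hR⟩ := nice_R hf
  have hMf : ∀ x, f x ≠ ⊤ → ⟪q, x⟫ ≤ ‖q‖ * R := fun x hx =>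
    le_trans (real_inner_le_norm q x) (mul_le_mul_of_nonneg_left (hR x hx) (norm_nonneg q))
  have hb2 := sup_ne_bot hf (fun x => ⟪q, x⟫ - r / 2 * ‖x‖ ^ 2)
  have ht2 := sup_ne_top hf (fun x => ⟪q, x⟫ - r / 2 * ‖x‖ ^ 2) (‖q‖ * R)
    (fun x hx => by have := hMf x hx; nlinarith [sq_nonneg ‖x‖])
  have key : (⨆ x, ((⟪q, x⟫ : ℝ) : EReal) - f x)
      ≤ (⨆ x, ((⟪q, x⟫ - r / 2 * ‖x‖ ^ 2 : ℝ) : EReal) - f x) + ((r * Dsup f : ℝ) : EReal) := by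
    refine iSup_le fun x => ?_
    by_cases hx : f x = ⊤
    · rw [hx, EReal.sub_top]; exact bot_le
    · have hfx : f x = ((f x).toReal : EReal) := (EReal.coe_toReal hx (hf.1.1 x)).symm
      have hD : r / 2 * ‖x‖ ^ 2 ≤ r * Dsup f := by
        have := half_sq_le_Dsup hf hx
        nlinarith
      calc ((⟪q, x⟫ : ℝ) : EReal) - f x
          = ((⟪q, x⟫ - (f x).toReal : ℝ) : EReal) := by rw [EReal.coe_sub, ← hfx]
        _ ≤ (((⟪q, x⟫ - r / 2 * ‖x‖ ^ 2 - (f x).toReal) + r * Dsup f : ℝ) : EReal) := by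
            exact EReal.coe_le_coe_iff.2 (by linarith)
        _ = (((⟪q, x⟫ - r / 2 * ‖x‖ ^ 2 : ℝ) : EReal) - f x) + ((r * Dsup f : ℝ) : EReal) := by
            rw [EReal.coe_add, EReal.coe_sub, ← hfx]
        _ ≤ _ := add_le_add (le_iSup (fun x => ((⟪q, x⟫ - r / 2 * ‖x‖ ^ 2 : ℝ) : EReal) - f x) x) le_rfl
  have := EReal.toReal_le_toReal key (sup_ne_bot hf _) (EReal.add_lt_top ht2 (EReal.coe_ne_top _)).ne
  rw [EReal.toReal_add ht2 hb2 (EReal.coe_ne_top _) (EReal.coe_ne_bot _),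
    EReal.toReal_coe] at this
  exact this

end Aux

/-- `θ_{ρ,μ}(0) - θ_{ρ,μ}(p_DS*) ≤ θ(0) - θ(p*) + ρ D_f + μ D_g`. -/
theorem stmt10 (n m : ℕ) (f : Euc n → EReal) (g : Euc m → EReal)
    (A : Euc n →L[ℝ] Euc m) (hf : NiceFn f) (hg : NiceFn g)
    (ρ μ κ : ℝ) (hρ : 0 < ρ) (hμ : 0 < μ) (hκ : 0 < κ)
    (pstar : Euc m) (hpstar : ∀ p, theta f g A pstar ≤ theta f g A p)
    (pDS : Euc m) (hpDS : UniqMin (thetaSmK f g A ρ μ κ) pDS) :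
    thetaSm f g A ρ μ 0 - thetaSm f g A ρ μ pDS
      ≤ theta f g A 0 - theta f g A pstar + ρ * Dsup f + μ * Dsup g := by
  have h1 : thetaSm f g A ρ μ 0 ≤ theta f g A 0 :=
    add_le_add (conjSm_le_conjFn hf hρ.le _) (conjSm_le_conjFn hg hμ.le _)
  have h2 : theta f g A pDS
      ≤ thetaSm f g A ρ μ pDS + ρ * Dsup f + μ * Dsup g := by
    have hf2 := conjFn_le_conjSm hf hρ.le (ContinuousLinearMap.adjoint A pDS)
    have hg2 := conjFn_le_conjSm hg hμ.le (-pDS)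
    unfold theta thetaSm
    linarith
  have h3 := hpstar pDS
  linarith
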